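/- Let k be a field, let B be a P-algebra over k, and let A be a k-algebra containing B as a graded subalgebra such that A is free as a left B-module. Then Hom_B(k, A) = 0, where k = B/B⁺ is the trivial B-module; equivalently, there is no nonzero element a ∈ A with b·a = 0 for every element b of the augmentation ideal B⁺. -/

import Mathlib

/-- A connected ℕ-graded algebra `B` over a field `k` (with grading `ℬ`) is a P-algebra with
respect to an increasing chain of graded subalgebras `F n` exhausting `B` and a strictly
increasing dimension function `pd` if each `F n` is a finite-dimensional Poincaré duality
algebra of dimension `pd n` (its grading being induced from that of `B`). -/
structure IsPAlgebra (k : Type*) [Field k] {B : Type*} [Ring B] [Algebra k B]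
    (ℬ : ℕ → Submodule k B) [GradedAlgebra ℬ]
    (F : ℕ → Subalgebra k B) (pd : ℕ → ℕ) : Prop where
  connected : ℬ 0 = (1 : Submodule k B)
  chain : ∀ n, F n ≤ F (n + 1)
  exhaustive : ∀ b : B, ∃ n, b ∈ F n
  graded_subalgebra : ∀ n, (F n).toSubmodule = ⨆ i, ℬ i ⊓ (F n).toSubmodule
  finiteDimensional : ∀ n, FiniteDimensional k (F n)
  pd_lt : ∀ n, pd n < pd (n + 1)
  eq_bot_of_gt : ∀ n, ∀ j, pd n < j → ℬ j ⊓ (F n).toSubmodule = ⊥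
  top_rank : ∀ n, Module.finrank k ↥(ℬ (pd n) ⊓ (F n).toSubmodule) = 1
  duality : ∀ n, ∀ j, j ≤ pd n → ∀ x ∈ ℬ j ⊓ (F n).toSubmodule, x ≠ 0 →
    ∃ z ∈ ℬ (pd n - j) ⊓ (F n).toSubmodule, z * x ≠ 0


open DirectSum

/-- key lemma: in a P-algebra, no nonzero element is annihilated by the augmentation ideal. -/
theorem key {k B : Type*} [Field k] [Ring B] [Algebra k B]
    (ℬ : ℕ → Submodule k B) [GradedAlgebra ℬ]
    (FB : ℕ → Subalgebra k B) (pd : ℕ → ℕ)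
    (hPB : IsPAlgebra k ℬ FB pd)
    (c : B) (hc : ∀ x ∈ (⨆ j > 0, ℬ j : Submodule k B), x * c = 0) : c = 0 := by
  classical
  by_contra hc0
  obtain ⟨n, hn⟩ := hPB.exhaustive c
  -- all components of c lie in FB n
  have hcomp : ∀ i, (decompose ℬ c i : B) ∈ FB n := by
    have h : c ∈ ⨆ i, ℬ i ⊓ (FB n).toSubmodule := by
      rw [← hPB.graded_subalgebra n]; exact hn
    intro i
    refine Submodule.iSup_induction (motive := fun y => (decompose ℬ y i : B) ∈ FB n)
      (fun j => ℬ j ⊓ (FB n).toSubmodule) h ?_ ?_ ?_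
    · intro j x hx
      rcases eq_or_ne i j with rfl | hne
      · rw [decompose_of_mem_same ℬ hx.1]; exact hx.2
      · rw [decompose_of_mem_ne ℬ hx.1 (Ne.symm hne)]; exact Subalgebra.zero_mem _
    · simp only [decompose_zero, DirectSum.zero_apply, ZeroMemClass.coe_zero]
      exact Subalgebra.zero_mem _
    · intro x y hx hy
      rw [decompose_add, DirectSum.add_apply, Submodule.coe_add]
      exact Subalgebra.add_mem _ hx hy
  -- pick j with c_j ≠ 0
  have : ∃ j, (decompose ℬ c j : B) ≠ 0 := by
    by_contra h
    push_neg at h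
    apply hc0
    rw [← DirectSum.sum_support_decompose ℬ c]
    exact Finset.sum_eq_zero fun j _ => h j
  obtain ⟨j, hj⟩ := this
  -- pick m with j < pd m and FB n ≤ FB m
  have hmono : Monotone FB := monotone_nat_of_le_succ hPB.chain
  have hsm : StrictMono pd := strictMono_nat_of_lt_succ hPB.pd_lt
  set m := max n (j + 1) with hm
  have hjm : j < pd m := lt_of_lt_of_le (Nat.lt_of_lt_of_le (Nat.lt_succ_self j)
    (le_max_right n (j+1))) (hsm.le_apply)
  have hcm : (decompose ℬ c j : B) ∈ ℬ j ⊓ (FB m).toSubmodule :=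
    ⟨(decompose ℬ c j).2, hmono (le_max_left n (j+1)) (hcomp j)⟩
  obtain ⟨z, hz, hznz⟩ := hPB.duality m j hjm.le _ hcm hj
  -- z is in the augmentation ideal
  have hzaug : z ∈ (⨆ j > 0, ℬ j : Submodule k B) := by
    apply Submodule.mem_iSup_of_mem (pd m - j)
    apply Submodule.mem_iSup_of_mem (Nat.sub_pos_of_lt hjm)
    exact hz.1
  have hzc : z * c = 0 := hc z hzaug
  apply hznz
  have := DirectSum.coe_decompose_mul_add_of_left_mem ℬ (b := c) (j := j) hz.1
  rw [hzc] at this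
  simpa using this.symm

/-- Let `B` be a P-algebra over a field `k` and let `A` be a graded `k`-algebra containing
`B` as a graded subalgebra (via the injective, grading-preserving algebra map `f`), such that
`A` is free as a left `B`-module (witnessed by a basis `b : ι → A`, i.e. the evaluation map
`(ι →₀ B) → A`, `c ↦ ∑ᵢ f(cᵢ) * bᵢ`, is bijective).  Then `Hom_B(k, A) = 0`:  there is no
nonzero `a ∈ A` with `x • a = 0` for every `x` in the augmentation ideal `B⁺ = ⊕_{j>0} B^j`. -/
theorem statement5 {k B A : Type*} [Field k] [Ring B] [Algebra k B] [Ring A] [Algebra k A]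
    (ℬ : ℕ → Submodule k B) [GradedAlgebra ℬ]
    (FB : ℕ → Subalgebra k B) (pd : ℕ → ℕ)
    (hPB : IsPAlgebra k ℬ FB pd)
    (𝒜 : ℕ → Submodule k A) [GradedAlgebra 𝒜]
    (f : B →ₐ[k] A) (hf : Function.Injective f)
    (hgraded : ∀ j, ∀ x ∈ ℬ j, f x ∈ 𝒜 j)
    {ι : Type*} (b : ι → A)
    (hfree : Function.Bijective fun c : ι →₀ B => c.sum fun i x => f x * b i) :
    ∀ a : A, (∀ x ∈ (⨆ j > 0, ℬ j : Submodule k B), f x * a = 0) → a = 0 := by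
  intro a ha
  obtain ⟨c, hc⟩ := hfree.2 a
  have hkill : ∀ x ∈ (⨆ j > 0, ℬ j : Submodule k B), x • c = 0 := by
    intro x hx
    apply hfree.1
    have h1 : ((x • c).sum fun i y => f y * b i) = f x * (c.sum fun i y => f y * b i) := by
      rw [Finsupp.sum_smul_index (fun i => by simp)]
      rw [Finsupp.mul_sum]
      exact Finsupp.sum_congr fun i _ => by rw [map_mul, mul_assoc]
    show ((x • c).sum fun i y => f y * b i) = ((0 : ι →₀ B).sum fun i y => f y * b i)
    rw [h1, show (c.sum fun i y => f y * b i) = a from hc, ha x hx, Finsupp.sum_zero_index]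
  have hc0 : c = 0 := by
    ext i
    refine key ℬ FB pd hPB (c i) fun x hx => ?_
    have := hkill x hx
    calc x * c i = (x • c) i := rfl
    _ = 0 := by rw [this]; rfl
  rw [← hc, hc0]
  exact Finsupp.sum_zero_index
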